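/- Let B be the group of transformations of ℂ[x,y] of the form (x,y) ↦ (ax + q(y), a⁻¹y + h) with a ∈ ℂ*, h ∈ ℂ, q ∈ ℂ[y], under composition. Then B is solvable of derived length 3: its derived subgroup B⁽¹⁾ consists of the transformations (x + p(y), y + f) with f ∈ ℂ, p ∈ ℂ[y]; its second derived subgroup B⁽²⁾ consists of (x + p(y), y) with p ∈ ℂ[y]; and B⁽²⁾ is abelian, with B/B⁽¹⁾ ≅ ℂ* and B⁽¹⁾/B⁽²⁾ ≅ ℂ. -/

import Mathlib

open Polynomial

noncomputable def DL : ℂ[X] →ₗ[ℂ] ℂ[X] where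
  toFun p := p.comp (X + C 1) - p
  map_add' p q := by simp [add_comp]; ring
  map_smul' c p := by simp [smul_comp, smul_sub]

lemma exists_delta (Q : ℂ[X]) : ∃ p : ℂ[X], p.comp (X + C 1) - p = Q := by
  suffices h : ∀ Q : ℂ[X], ∃ p, DL p = Q by
    obtain ⟨p, hp⟩ := h Q; exact ⟨p, hp⟩
  have key : ∀ n : ℕ, ∃ p : ℂ[X], DL p = X ^ n := by
    intro n
    induction n using Nat.strong_induction_on with
    | _ n ih =>
      choose! p hp using ih
      refine ⟨((n+1:ℂ))⁻¹ • ((X:ℂ[X])^(n+1) - ∑ k ∈ Finset.range n, ((n+1).choose k : ℂ) • p k), ?_⟩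
      have hD : DL ((X:ℂ[X])^(n+1)) = ∑ k ∈ Finset.range (n+1), ((n+1).choose k : ℂ[X]) * X ^ k := by
        have h0 : DL ((X:ℂ[X])^(n+1)) = ((X:ℂ[X])^(n+1)).comp (X + C 1) - X^(n+1) := rfl
        rw [h0, pow_comp, X_comp, add_pow, Finset.sum_range_succ]
        simp only [C_1, one_pow, mul_one, Nat.choose_self, Nat.cast_one, pow_zero,
          Nat.sub_self]
        rw [add_sub_cancel_right]
        exact Finset.sum_congr rfl fun k _ => by ring
      rw [map_smul, map_sub, map_sum, hD]
      rw [Finset.sum_range_succ]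
      have hsum : ∑ k ∈ Finset.range n, DL (((n+1).choose k : ℂ) • p k)
          = ∑ k ∈ Finset.range n, ((n+1).choose k : ℂ[X]) * X ^ k := by
        refine Finset.sum_congr rfl fun k hk => ?_
        rw [map_smul, hp k (Finset.mem_range.mp hk)]
        simp [Polynomial.smul_eq_C_mul]
      rw [hsum]
      simp only [add_sub_cancel_left]
      have hne : ((n:ℂ)+1) ≠ 0 := Nat.cast_add_one_ne_zero n
      have hcast : (((n+1).choose n : ℕ) : ℂ[X]) * (X:ℂ[X])^n = ((n:ℂ)+1) • (X:ℂ[X])^n := by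
        rw [Nat.choose_succ_self_right, smul_eq_C_mul]
        rw [C_add, C_1, C_eq_natCast]
        push_cast
        ring
      rw [hcast, smul_smul, inv_mul_cancel₀ hne, one_smul]
  intro Q
  induction Q using Polynomial.induction_on' with
  | add p q hp hq =>
    obtain ⟨a, ha⟩ := hp; obtain ⟨b, hb⟩ := hq
    exact ⟨a + b, by rw [map_add, ha, hb]⟩
  | monomial n c =>
    obtain ⟨p, hp⟩ := key n
    exact ⟨c • p, by rw [map_smul, hp, smul_eq_C_mul, ← C_mul_X_pow_eq_monomial]⟩


lemma exists_L (Q : ℂ[X]) : ∃ p : ℂ[X], C 2 * p.comp (C 2 * X) - p = Q := by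
  induction Q using Polynomial.induction_on' with
  | add q r hq hr =>
    obtain ⟨a, ha⟩ := hq; obtain ⟨b, hb⟩ := hr
    refine ⟨a + b, ?_⟩
    rw [add_comp, ← ha, ← hb]; ring
  | monomial n c =>
    have h1 : ((2:ℂ)^(n+1) - 1) ≠ 0 := by
      intro h
      have h2 : (((2:ℝ)^(n+1) - 1 : ℝ) : ℂ) = (2:ℂ)^(n+1) - 1 := by push_cast; ring
      rw [← h2] at h
      have h3 := Complex.ofReal_eq_zero.mp h
      have hlt : (1:ℝ) < 2^(n+1) := one_lt_pow₀ one_lt_two (Nat.succ_ne_zero n)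
      linarith
    set d := c / (2^(n+1) - 1) with hd
    refine ⟨C d * X ^ n, ?_⟩
    rw [mul_comp, pow_comp, C_comp, X_comp, mul_pow, ← C_pow, ← C_mul_X_pow_eq_monomial]
    have hval : 2 * (d * ((2:ℂ)^n)) - d = c := by
      rw [hd]; field_simp; ring
    rw [show C 2 * (C d * (C ((2:ℂ)^n) * X ^ n)) - C d * X ^ n
        = C (2*(d*(2:ℂ)^n) - d) * X^n from by rw [C_sub, C_mul, C_mul]; ring, hval]

noncomputable def Tmap (a : ℂ) (ha : a ≠ 0) (q : ℂ[X]) (h : ℂ) : Equiv.Perm (ℂ × ℂ) where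
  toFun v := (a * v.1 + q.eval v.2, a⁻¹ * v.2 + h)
  invFun v := (a⁻¹ * (v.1 - q.eval (a * (v.2 - h))), a * (v.2 - h))
  left_inv v := by
    obtain ⟨x, y⟩ := v
    show (a⁻¹ * (a * x + q.eval y - q.eval (a * (a⁻¹ * y + h - h))), a * (a⁻¹ * y + h - h))
        = (x, y)
    rw [show a⁻¹ * y + h - h = a⁻¹ * y by ring, show a * (a⁻¹ * y) = y by field_simp,
      show a * x + q.eval y - q.eval y = a * x by ring,
      show a⁻¹ * (a * x) = x by field_simp]
  right_inv v := by
    obtain ⟨x, y⟩ := v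
    show (a * (a⁻¹ * (x - q.eval (a * (y - h)))) + q.eval (a * (y - h)),
        a⁻¹ * (a * (y - h)) + h) = (x, y)
    rw [show a * (a⁻¹ * (x - q.eval (a * (y - h)))) = x - q.eval (a * (y - h)) by field_simp,
      show x - q.eval (a * (y - h)) + q.eval (a * (y - h)) = x by ring,
      show a⁻¹ * (a * (y - h)) = y - h by field_simp,
      show y - h + h = y by ring]

@[simp] lemma Tmap_apply (a : ℂ) (ha : a ≠ 0) (q : ℂ[X]) (h : ℂ) (v : ℂ × ℂ) :
    Tmap a ha q h v = (a * v.1 + q.eval v.2, a⁻¹ * v.2 + h) := rfl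

open scoped commutatorElement in
lemma eq_commutator_of {G : Type*} [Group G] (g h s : G) (key : g * h = s * (h * g)) :
    s = ⁅g, h⁆ := by
  have h1 : s = g * h * (h * g)⁻¹ := eq_mul_inv_of_mul_eq key.symm
  rw [h1, commutatorElement_def, mul_inv_rev, ← mul_assoc]

/-- The group `B` of triangular transformations
`(x,y) ↦ (ax + q(y), a⁻¹y + h)` (realized as permutations of `ℂ × ℂ`) is
solvable of derived length 3, with `B⁽¹⁾` the maps `(x + p(y), y + f)`,
`B⁽²⁾` the maps `(x + p(y), y)` (which is abelian), `B/B⁽¹⁾ ≅ ℂ*` and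
`B⁽¹⁾/B⁽²⁾ ≅ ℂ`. -/
theorem triangular_group_derived_series
    (B : Subgroup (Equiv.Perm (ℂ × ℂ)))
    (hB : ∀ σ : Equiv.Perm (ℂ × ℂ), σ ∈ B ↔
      ∃ (a : ℂ) (q : ℂ[X]) (h : ℂ), a ≠ 0 ∧
        ∀ v : ℂ × ℂ, σ v = (a * v.1 + q.eval v.2, a⁻¹ * v.2 + h)) :
    IsSolvable ↥B ∧
    derivedSeries ↥B 3 = ⊥ ∧
    derivedSeries ↥B 2 ≠ ⊥ ∧
    (∀ σ : ↥B, σ ∈ derivedSeries ↥B 1 ↔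
      ∃ (p : ℂ[X]) (f : ℂ), ∀ v : ℂ × ℂ,
        (σ : Equiv.Perm (ℂ × ℂ)) v = (v.1 + p.eval v.2, v.2 + f)) ∧
    (∀ σ : ↥B, σ ∈ derivedSeries ↥B 2 ↔
      ∃ p : ℂ[X], ∀ v : ℂ × ℂ,
        (σ : Equiv.Perm (ℂ × ℂ)) v = (v.1 + p.eval v.2, v.2)) ∧
    (∀ σ τ : ↥B, σ ∈ derivedSeries ↥B 2 → τ ∈ derivedSeries ↥B 2 → Commute σ τ) ∧
    (∃ φ : ↥B →* ℂˣ, Function.Surjective φ ∧ φ.ker = derivedSeries ↥B 1) ∧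
    (∃ ψ : ↥(derivedSeries ↥B 1) →* Multiplicative ℂ, Function.Surjective ψ ∧
      ψ.ker = (derivedSeries ↥B 2).subgroupOf (derivedSeries ↥B 1)) := by
  have hdata : ∀ σ : ↥B, ∃ (a : ℂ) (q : ℂ[X]) (h : ℂ), a ≠ 0 ∧
      ∀ v : ℂ × ℂ, (σ : Equiv.Perm (ℂ × ℂ)) v = (a * v.1 + q.eval v.2, a⁻¹ * v.2 + h) :=
    fun σ => (hB σ).mp σ.2
  have hTmem : ∀ (a : ℂ) (ha : a ≠ 0) (q : ℂ[X]) (h : ℂ), Tmap a ha q h ∈ B :=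
    fun a ha q h => (hB _).mpr ⟨a, q, h, ha, fun v => rfl⟩
  have hmulapp : ∀ (σ τ : ↥B) (v : ℂ × ℂ),
      ((σ * τ : ↥B) : Equiv.Perm (ℂ × ℂ)) v
        = (σ : Equiv.Perm (ℂ × ℂ)) ((τ : Equiv.Perm (ℂ × ℂ)) v) := fun _ _ _ => rfl
  have hAval : ∀ (σ : ↥B) (a : ℂ) (q : ℂ[X]) (h : ℂ),
      (∀ v : ℂ × ℂ, (σ : Equiv.Perm (ℂ × ℂ)) v = (a * v.1 + q.eval v.2, a⁻¹ * v.2 + h)) →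
      ((σ : Equiv.Perm (ℂ × ℂ)) (1, 0)).1 - ((σ : Equiv.Perm (ℂ × ℂ)) (0, 0)).1 = a := by
    intro σ a q h hf
    rw [hf, hf]
    show a * 1 + q.eval 0 - (a * 0 + q.eval 0) = a
    ring
  have hA0 : ∀ σ : ↥B,
      ((σ : Equiv.Perm (ℂ × ℂ)) (1, 0)).1 - ((σ : Equiv.Perm (ℂ × ℂ)) (0, 0)).1 ≠ 0 := by
    intro σ
    obtain ⟨a, q, h, ha, hf⟩ := hdata σ
    rw [hAval σ a q h hf]; exact ha
  set φ : ↥B →* ℂˣ := MonoidHom.mk'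
    (fun σ => Units.mk0 _ (hA0 σ))
    (by
      intro σ τ
      obtain ⟨a, q, h, ha, hf⟩ := hdata σ
      obtain ⟨b, r, k, hb, hg⟩ := hdata τ
      apply Units.ext
      show (((σ * τ : ↥B) : Equiv.Perm (ℂ × ℂ)) (1, 0)).1
          - (((σ * τ : ↥B) : Equiv.Perm (ℂ × ℂ)) (0, 0)).1
        = (((σ : Equiv.Perm (ℂ × ℂ)) (1, 0)).1 - ((σ : Equiv.Perm (ℂ × ℂ)) (0, 0)).1)
          * (((τ : Equiv.Perm (ℂ × ℂ)) (1, 0)).1 - ((τ : Equiv.Perm (ℂ × ℂ)) (0, 0)).1)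
      rw [hAval σ a q h hf, hAval τ b r k hg]
      have hab : ∀ v : ℂ × ℂ, ((σ * τ : ↥B) : Equiv.Perm (ℂ × ℂ)) v
          = (a * b * v.1 + (C a * r + q.comp (C b⁻¹ * X + C k)).eval v.2,
             (a * b)⁻¹ * v.2 + (a⁻¹ * k + h)) := by
        intro v
        rw [hmulapp, hg, hf]
        simp only [eval_add, eval_mul, eval_C, eval_comp, eval_X, Prod.mk.injEq, mul_inv]
        exact ⟨by ring, by ring⟩
      rw [hAval (σ * τ) _ _ _ hab]) with hφdef
  have hkerφ : ∀ σ : ↥B, σ ∈ φ.ker ↔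
      ((σ : Equiv.Perm (ℂ × ℂ)) (1, 0)).1 - ((σ : Equiv.Perm (ℂ × ℂ)) (0, 0)).1 = 1 := by
    intro σ
    rw [MonoidHom.mem_ker, Units.ext_iff, Units.val_one]
    exact Iff.rfl
  have hkform : ∀ σ : ↥B, σ ∈ φ.ker ↔
      ∃ (p : ℂ[X]) (f : ℂ), ∀ v : ℂ × ℂ,
        (σ : Equiv.Perm (ℂ × ℂ)) v = (v.1 + p.eval v.2, v.2 + f) := by
    intro σ
    rw [hkerφ]
    constructor
    · intro h1
      obtain ⟨a, q, h, ha, hf⟩ := hdata σ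
      have ha1 : a = 1 := (hAval σ a q h hf).symm.trans h1
      subst ha1
      exact ⟨q, h, fun v => by rw [hf v]; simp⟩
    · rintro ⟨p, f, hf⟩
      exact hAval σ 1 p f (fun v => by rw [hf v]; simp)
  have hD1 : derivedSeries ↥B 1 = φ.ker := by
    apply le_antisymm
    · rw [show derivedSeries ↥B 1 = ⁅(⊤ : Subgroup ↥B), ⊤⁆ by
        rw [derivedSeries_succ, derivedSeries_zero]]
      rw [Subgroup.commutator_le]
      intro g _ h _
      rw [MonoidHom.mem_ker, map_commutatorElement]
      exact commutatorElement_eq_one_iff_commute.mpr (mul_comm _ _)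
    · intro σ hσ
      obtain ⟨P, F, hform⟩ := (hkform σ).mp hσ
      obtain ⟨p, hp⟩ := exists_L (P.comp (X + C (-2 * F)))
      have hpev : ∀ y : ℂ, 2 * p.eval (2 * y) - p.eval y = P.eval (y + -2 * F) := by
        intro y
        have h0 := congrArg (eval y) hp
        simpa using h0
      set g : ↥B := ⟨Tmap 2 two_ne_zero 0 0, hTmem _ _ _ _⟩ with hgdef
      set h : ↥B := ⟨Tmap 1 one_ne_zero p (-2 * F), hTmem _ _ _ _⟩ with hhdef
      have key : g * h = σ * (h * g) := by
        apply Subtype.ext; apply Equiv.ext; intro v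
        obtain ⟨x, y⟩ := v
        show (Tmap 2 two_ne_zero 0 0) ((Tmap 1 one_ne_zero p (-2 * F)) (x, y))
            = (σ : Equiv.Perm (ℂ × ℂ))
              ((Tmap 1 one_ne_zero p (-2 * F)) ((Tmap 2 two_ne_zero 0 0) (x, y)))
        simp only [Tmap_apply, hform, eval_zero, inv_one, one_mul, mul_zero, add_zero, zero_add]
        have e := hpev (2⁻¹ * y)
        rw [show (2 : ℂ) * (2⁻¹ * y) = y by ring] at e
        simp only [Prod.mk.injEq]
        constructor
        · linear_combination e
        · ring
      rw [show derivedSeries ↥B 1 = ⁅(⊤ : Subgroup ↥B), ⊤⁆ by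
        rw [derivedSeries_succ, derivedSeries_zero]]
      rw [eq_commutator_of g h σ key]
      exact Subgroup.commutator_mem_commutator (Subgroup.mem_top g) (Subgroup.mem_top h)
  have hchar1 : ∀ σ : ↥B, σ ∈ derivedSeries ↥B 1 ↔
      ∃ (p : ℂ[X]) (f : ℂ), ∀ v : ℂ × ℂ,
        (σ : Equiv.Perm (ℂ × ℂ)) v = (v.1 + p.eval v.2, v.2 + f) := by
    intro σ; rw [hD1]; exact hkform σ
  have hinv : ∀ (g : ↥B) (p : ℂ[X]) (f : ℂ),
      (∀ v : ℂ × ℂ, (g : Equiv.Perm (ℂ × ℂ)) v = (v.1 + p.eval v.2, v.2 + f)) →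
      ∀ v : ℂ × ℂ, ((g : Equiv.Perm (ℂ × ℂ)))⁻¹ v = (v.1 - p.eval (v.2 - f), v.2 - f) := by
    intro g p f hg v
    rw [Equiv.Perm.inv_def, Equiv.symm_apply_eq, hg]
    obtain ⟨x, y⟩ := v
    show (x, y) = (x - p.eval (y - f) + p.eval (y - f), y - f + f)
    rw [show x - p.eval (y - f) + p.eval (y - f) = x by ring, show y - f + f = y by ring]
  set K2 : Subgroup ↥B :=
    { carrier := {σ : ↥B | ∃ p : ℂ[X], ∀ v : ℂ × ℂ,
        (σ : Equiv.Perm (ℂ × ℂ)) v = (v.1 + p.eval v.2, v.2)},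
      one_mem' := ⟨0, fun v => by simp⟩,
      mul_mem' := by
        rintro σ τ ⟨p, hp⟩ ⟨r, hr⟩
        refine ⟨p + r, fun v => ?_⟩
        rw [hmulapp, hr, hp]
        simp only [eval_add, Prod.mk.injEq]
        exact ⟨by ring, by simp⟩
      inv_mem' := by
        rintro σ ⟨p, hp⟩
        refine ⟨-p, fun v => ?_⟩
        show ((σ : Equiv.Perm (ℂ × ℂ)))⁻¹ v = _
        rw [hinv σ p 0 (fun w => by rw [hp w]; simp) v]
        simp only [sub_zero, eval_neg, Prod.mk.injEq]
        exact ⟨by ring, by simp⟩ } with hK2def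
  have hK2 : ∀ σ : ↥B, σ ∈ K2 ↔ ∃ p : ℂ[X], ∀ v : ℂ × ℂ,
      (σ : Equiv.Perm (ℂ × ℂ)) v = (v.1 + p.eval v.2, v.2) := fun σ => Iff.rfl
  have hD2 : derivedSeries ↥B 2 = K2 := by
    apply le_antisymm
    · rw [show derivedSeries ↥B 2 = ⁅derivedSeries ↥B 1, derivedSeries ↥B 1⁆ from
        derivedSeries_succ ↥B 1]
      rw [Subgroup.commutator_le]
      intro g hg h hh
      obtain ⟨p, f, hgf⟩ := (hchar1 g).mp hg
      obtain ⟨r, k, hhf⟩ := (hchar1 h).mp hh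
      refine (hK2 _).mpr ⟨p.comp (X - C f) + r.comp (X - C f - C k)
        - p.comp (X - C f - C k) - r.comp (X - C k), fun v => ?_⟩
      obtain ⟨x, y⟩ := v
      show (g : Equiv.Perm (ℂ × ℂ)) ((h : Equiv.Perm (ℂ × ℂ))
          (((g : Equiv.Perm (ℂ × ℂ)))⁻¹ (((h : Equiv.Perm (ℂ × ℂ)))⁻¹ (x, y)))) = _
      rw [hinv h r k hhf, hinv g p f hgf, hhf, hgf]
      simp only [eval_add, eval_sub, eval_comp, eval_X, eval_C, Prod.mk.injEq]
      rw [show y - k - f + k = y - f by ring, show y - k - f = y - f - k by ring]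
      exact ⟨by ring, by ring⟩
    · intro σ hσ
      obtain ⟨Q, hQ⟩ := (hK2 σ).mp hσ
      obtain ⟨p, hp⟩ := exists_delta Q
      have hpev : ∀ y : ℂ, p.eval (y + 1) - p.eval y = Q.eval y := by
        intro y
        have h0 := congrArg (eval y) hp
        simpa using h0
      set g : ↥B := ⟨Tmap 1 one_ne_zero 0 (-1), hTmem _ _ _ _⟩ with hgdef
      set h : ↥B := ⟨Tmap 1 one_ne_zero p 0, hTmem _ _ _ _⟩ with hhdef
      have hgmem : g ∈ derivedSeries ↥B 1 := (hchar1 g).mpr ⟨0, -1, fun v => by simp [hgdef]⟩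
      have hhmem : h ∈ derivedSeries ↥B 1 := (hchar1 h).mpr ⟨p, 0, fun v => by simp [hhdef]⟩
      have key : g * h = σ * (h * g) := by
        apply Subtype.ext; apply Equiv.ext; intro v
        obtain ⟨x, y⟩ := v
        show (Tmap 1 one_ne_zero 0 (-1)) ((Tmap 1 one_ne_zero p 0) (x, y))
            = (σ : Equiv.Perm (ℂ × ℂ))
              ((Tmap 1 one_ne_zero p 0) ((Tmap 1 one_ne_zero 0 (-1)) (x, y)))
        simp only [Tmap_apply, hQ, eval_zero, inv_one, one_mul, add_zero]
        have e := hpev (y + -1)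
        rw [show y + -1 + 1 = y by ring] at e
        simp only [Prod.mk.injEq]
        exact ⟨by linear_combination e, by simp⟩
      rw [show derivedSeries ↥B 2 = ⁅derivedSeries ↥B 1, derivedSeries ↥B 1⁆ from
        derivedSeries_succ ↥B 1]
      rw [eq_commutator_of g h σ key]
      exact Subgroup.commutator_mem_commutator hgmem hhmem
  have hchar2 : ∀ σ : ↥B, σ ∈ derivedSeries ↥B 2 ↔
      ∃ p : ℂ[X], ∀ v : ℂ × ℂ,
        (σ : Equiv.Perm (ℂ × ℂ)) v = (v.1 + p.eval v.2, v.2) := by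
    intro σ; rw [hD2]; exact hK2 σ
  have hcomm : ∀ σ τ : ↥B, σ ∈ derivedSeries ↥B 2 → τ ∈ derivedSeries ↥B 2 →
      Commute σ τ := by
    intro σ τ hσ hτ
    obtain ⟨p, hp⟩ := (hchar2 σ).mp hσ
    obtain ⟨r, hr⟩ := (hchar2 τ).mp hτ
    show σ * τ = τ * σ
    apply Subtype.ext; apply Equiv.ext; intro v
    show (σ : Equiv.Perm (ℂ × ℂ)) ((τ : Equiv.Perm (ℂ × ℂ)) v)
        = (τ : Equiv.Perm (ℂ × ℂ)) ((σ : Equiv.Perm (ℂ × ℂ)) v)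
    simp only [hp, hr]
    simp only [Prod.mk.injEq]
    exact ⟨by ring, by simp⟩
  have hD3 : derivedSeries ↥B 3 = ⊥ := by
    refine le_antisymm ?_ bot_le
    rw [show derivedSeries ↥B 3 = ⁅derivedSeries ↥B 2, derivedSeries ↥B 2⁆ from
      derivedSeries_succ ↥B 2]
    rw [Subgroup.commutator_le]
    intro g hg h hh
    rw [Subgroup.mem_bot]
    exact commutatorElement_eq_one_iff_commute.mpr (hcomm g h hg hh)
  have hD2ne : derivedSeries ↥B 2 ≠ ⊥ := by
    intro hbot
    have hmem : (⟨Tmap 1 one_ne_zero X 0, hTmem _ _ _ _⟩ : ↥B) ∈ derivedSeries ↥B 2 :=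
      (hchar2 _).mpr ⟨X, fun v => by simp⟩
    rw [hbot, Subgroup.mem_bot] at hmem
    have h10 := congrArg (fun s : ↥B => ((s : Equiv.Perm (ℂ × ℂ)) (0, 1)).1) hmem
    simp [Tmap_apply] at h10
  have hφsurj : Function.Surjective φ := by
    intro u
    refine ⟨⟨Tmap u.val u.ne_zero 0 0, hTmem _ _ _ _⟩, ?_⟩
    apply Units.ext
    exact hAval _ u.val 0 0 (fun v => rfl)
  set ψ : ↥(derivedSeries ↥B 1) →* Multiplicative ℂ := MonoidHom.mk'
    (fun σ => Multiplicative.ofAdd ((((σ : ↥B) : Equiv.Perm (ℂ × ℂ))) (0, 0)).2)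
    (by
      intro σ τ
      obtain ⟨p, f, hf⟩ := (hchar1 σ).mp σ.2
      obtain ⟨r, k, hk⟩ := (hchar1 τ).mp τ.2
      have hco : (((σ * τ : ↥(derivedSeries ↥B 1)) : ↥B) : Equiv.Perm (ℂ × ℂ)) (0, 0)
          = ((σ : ↥B) : Equiv.Perm (ℂ × ℂ)) (((τ : ↥B) : Equiv.Perm (ℂ × ℂ)) (0, 0)) := rfl
      show Multiplicative.ofAdd
          ((((σ * τ : ↥(derivedSeries ↥B 1)) : ↥B) : Equiv.Perm (ℂ × ℂ)) (0, 0)).2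
        = Multiplicative.ofAdd ((((σ : ↥B)) : Equiv.Perm (ℂ × ℂ)) (0, 0)).2
          * Multiplicative.ofAdd ((((τ : ↥B)) : Equiv.Perm (ℂ × ℂ)) (0, 0)).2
      rw [hco, hk, hf, hf, ← ofAdd_add]
      exact congrArg _ (by show (0 : ℂ) + k + f = (0 + f) + (0 + k); ring)) with hψdef
  have hψsurj : Function.Surjective ψ := by
    intro x
    refine ⟨⟨⟨Tmap 1 one_ne_zero 0 (Multiplicative.toAdd x), hTmem _ _ _ _⟩,
      (hchar1 _).mpr ⟨0, Multiplicative.toAdd x, fun v => by simp⟩⟩, ?_⟩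
    show Multiplicative.ofAdd ((1 : ℂ)⁻¹ * 0 + Multiplicative.toAdd x) = x
    rw [show (1 : ℂ)⁻¹ * 0 + Multiplicative.toAdd x = Multiplicative.toAdd x by ring]
    exact ofAdd_toAdd x
  have hψker : ψ.ker = (derivedSeries ↥B 2).subgroupOf (derivedSeries ↥B 1) := by
    ext σ
    rw [MonoidHom.mem_ker, Subgroup.mem_subgroupOf]
    obtain ⟨p, f, hf⟩ := (hchar1 σ).mp σ.2
    constructor
    · intro h1
      have hf2 : ((((σ : ↥B)) : Equiv.Perm (ℂ × ℂ)) (0, 0)).2 = 0 := by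
        have h2 := congrArg Multiplicative.toAdd h1
        exact h2
      rw [hf] at hf2
      have hf0 : f = 0 := by simpa using hf2
      exact (hchar2 _).mpr ⟨p, fun v => by rw [hf v, hf0]; simp⟩
    · intro h2
      obtain ⟨r, hr⟩ := (hchar2 _).mp h2
      show Multiplicative.ofAdd ((((σ : ↥B)) : Equiv.Perm (ℂ × ℂ)) (0, 0)).2 = 1
      rw [hr]
      exact ofAdd_zero
  exact ⟨⟨⟨3, hD3⟩⟩, hD3, hD2ne, hchar1, hchar2, hcomm, ⟨φ, hφsurj, hD1.symm⟩,
    ⟨ψ, hψsurj, hψker⟩⟩
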